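/- arXiv:1910.01513 — 2 statements merged into one kernel-verified Lean document; each statement's English description precedes it below -/
import Mathlib

section
/- Form-invariance of QP systems under QMT: let F be the QP map with matrices (A, B, λ) and let C be an invertible n×n real matrix. Then Φ_C⁻¹ ∘ F ∘ Φ_C equals the QP map with matrices (A', B', λ') = (C⁻¹·A, B·C, C⁻¹·λ). That is, performing the substitution x = Φ_C(y) transforms the QP system with data (A,B,λ) into the QP system with data (C⁻¹A, BC, C⁻¹λ). -/
/-- Form-invariance of QP systems under quasimonomial transformations:
`Φ_{C⁻¹} ∘ F ∘ Φ_C` is the QP map with data `(C⁻¹A, BC, C⁻¹λ)`. -/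
theorem qp_form_invariance (n : ℕ) (A B C : Matrix (Fin n) (Fin n) ℝ)
    (lam : Fin n → ℝ) (hC : IsUnit C.det) :
    let Phi : Matrix (Fin n) (Fin n) ℝ → (Fin n → ℝ) → (Fin n → ℝ) :=
      fun M y i => ∏ j, y j ^ M i j
    let F : (Fin n → ℝ) → (Fin n → ℝ) :=
      fun x i => x i * Real.exp (lam i + ∑ j, A i j * ∏ k, x k ^ B j k)
    let F' : (Fin n → ℝ) → (Fin n → ℝ) :=
      fun y i => y i * Real.exp ((C⁻¹.mulVec lam) i +
        ∑ j, (C⁻¹ * A) i j * ∏ k, y k ^ (B * C) j k)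
    ∀ y : Fin n → ℝ, (∀ i, 0 < y i) → Phi C⁻¹ (F (Phi C y)) = F' y := by
  intro Phi F F' y hy
  have hCC : C⁻¹ * C = 1 := Matrix.nonsing_inv_mul C hC
  set L : Fin n → ℝ := fun k => Real.log (y k) with hL
  have hlog : ∀ (v : Fin n → ℝ), ∏ k, y k ^ v k = Real.exp (∑ k, v k * L k) := by
    intro v
    rw [Real.exp_sum]
    refine Finset.prod_congr rfl fun k _ => ?_
    rw [Real.rpow_def_of_pos (hy k), mul_comm]
  have hexp : ∀ (a c : ℝ), Real.exp a ^ c = Real.exp (a * c) := by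
    intro a c; rw [Real.rpow_def_of_pos (Real.exp_pos a), Real.log_exp]
  funext i
  simp only [Phi, F, F']
  have hu : ∀ j, ∏ k, (∏ m, y m ^ C k m) ^ B j k = ∏ k, y k ^ (B * C) j k := by
    intro j
    calc ∏ k, (∏ m, y m ^ C k m) ^ B j k
        = ∏ k, Real.exp ((∑ m, C k m * L m) * B j k) := by
          refine Finset.prod_congr rfl fun k _ => ?_; rw [hlog, hexp]
      _ = Real.exp (∑ k, (∑ m, C k m * L m) * B j k) := (Real.exp_sum _ _).symm
      _ = Real.exp (∑ m, (B * C) j m * L m) := by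
          congr 1
          simp only [Finset.sum_mul]
          rw [Finset.sum_comm]
          refine Finset.sum_congr rfl fun m _ => ?_
          rw [Matrix.mul_apply, Finset.sum_mul]
          exact Finset.sum_congr rfl fun k _ => by ring
      _ = ∏ k, y k ^ (B * C) j k := (hlog _).symm
  simp only [hu]
  set u : Fin n → ℝ := fun k => ∏ m, y m ^ (B * C) k m with hudef
  have hx : ∀ j, (∏ m, y m ^ C j m) * Real.exp (lam j + ∑ k, A j k * u k)
      = Real.exp ((∑ m, C j m * L m) + (lam j + ∑ k, A j k * u k)) := by
    intro j; rw [hlog, ← Real.exp_add]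
  have hLHS : ∏ j, ((∏ m, y m ^ C j m) * Real.exp (lam j + ∑ k, A j k * u k)) ^ C⁻¹ i j
      = Real.exp (∑ j, ((∑ m, C j m * L m) + (lam j + ∑ k, A j k * u k)) * C⁻¹ i j) := by
    rw [Real.exp_sum]
    refine Finset.prod_congr rfl fun j _ => ?_
    rw [hx j, hexp]
  rw [hLHS, show y i = Real.exp (L i) from (Real.exp_log (hy i)).symm, ← Real.exp_add]
  congr 1
  have h1 : ∑ j, (∑ m, C j m * L m) * C⁻¹ i j = L i := by
    simp only [Finset.sum_mul]
    rw [Finset.sum_comm]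
    have key : ∀ m, ∑ j, C j m * L m * C⁻¹ i j = (C⁻¹ * C) i m * L m := by
      intro m
      rw [Matrix.mul_apply, Finset.sum_mul]
      exact Finset.sum_congr rfl fun j _ => by ring
    simp only [key, hCC, Matrix.one_apply]
    simp [Finset.sum_ite_eq]
  have h2 : ∑ j, lam j * C⁻¹ i j = C⁻¹.mulVec lam i := by
    simp [Matrix.mulVec, dotProduct, mul_comm]
  have h3 : ∑ j, (∑ k, A j k * u k) * C⁻¹ i j = ∑ j, (C⁻¹ * A) i j * u j := by
    simp only [Finset.sum_mul]
    rw [Finset.sum_comm]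
    refine Finset.sum_congr rfl fun k _ => ?_
    rw [Matrix.mul_apply, Finset.sum_mul]
    exact Finset.sum_congr rfl fun j _ => by ring
  simp only [add_mul, Finset.sum_add_distrib]
  rw [h1, h2, h3]
end

section
/- Every QP system with invertible exponent matrix B is topologically conjugate to its canonical Lotka-Volterra representative: if F is the QP map with data (A, B, λ) and B is invertible, then Φ_{B⁻¹}⁻¹ ∘ F ∘ Φ_{B⁻¹} (equivalently Φ_B ∘ F ∘ Φ_{B⁻¹}) is the LV map with data (A_LV, λ_LV) = (B·A, B·λ), i.e., the QP map with matrices (B·A, I, B·λ). -/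
private lemma phi_cancel {n : ℕ} (B : Matrix (Fin n) (Fin n) ℝ) (hB : IsUnit B.det)
    (x : Fin n → ℝ) (hx : ∀ i, 0 < x i) (i : Fin n) :
    ∏ j, (∏ k, x k ^ (B⁻¹) j k) ^ B i j = x i := by
  have h1 : ∀ j, (∏ k, x k ^ (B⁻¹) j k) ^ B i j = ∏ k, x k ^ ((B⁻¹) j k * B i j) := by
    intro j
    rw [← Real.finset_prod_rpow _ _ (fun k _ => (Real.rpow_pos_of_pos (hx k) _).le)]
    exact Finset.prod_congr rfl fun k _ => (Real.rpow_mul (hx k).le _ _).symm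
  simp_rw [h1]
  rw [Finset.prod_comm]
  have h2 : ∀ k, ∏ j, x k ^ ((B⁻¹) j k * B i j) = x k ^ ((1 : Matrix (Fin n) (Fin n) ℝ) i k) := by
    intro k
    rw [← Real.rpow_sum_of_pos (hx k)]
    congr 1
    rw [← Matrix.mul_nonsing_inv B hB]
    simp [Matrix.mul_apply, mul_comm]
  simp_rw [h2]
  rw [Finset.prod_eq_single i (fun k _ hk => by simp [Matrix.one_apply, Ne.symm hk])
    (fun h => absurd (Finset.mem_univ i) h)]
  simp [Matrix.one_apply]

/-- Every QP system with invertible exponent matrix `B` is conjugate, via the QMT of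
matrix `B⁻¹`, to its canonical Lotka–Volterra representative with data `(B·A, B·λ)`. -/
theorem qp_lv_canonical_form (n : ℕ) (A B : Matrix (Fin n) (Fin n) ℝ)
    (lam : Fin n → ℝ) (hB : IsUnit B.det) :
    let Phi : Matrix (Fin n) (Fin n) ℝ → (Fin n → ℝ) → (Fin n → ℝ) :=
      fun M y i => ∏ j, y j ^ M i j
    let F : (Fin n → ℝ) → (Fin n → ℝ) :=
      fun x i => x i * Real.exp (lam i + ∑ j, A i j * ∏ k, x k ^ B j k)
    let G : (Fin n → ℝ) → (Fin n → ℝ) :=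
      fun x i => x i * Real.exp ((B.mulVec lam) i + ∑ j, (B * A) i j * x j)
    ∀ x : Fin n → ℝ, (∀ i, 0 < x i) → Phi B (F (Phi B⁻¹ x)) = G x := by
  intro Phi F G x hx
  funext i
  set y : Fin n → ℝ := Phi B⁻¹ x with hy
  have hypos : ∀ j, 0 < y j := fun j =>
    Finset.prod_pos fun k _ => Real.rpow_pos_of_pos (hx k) _
  have hprod : ∀ j, ∏ k, y k ^ B j k = x j := fun j => phi_cancel B hB x hx j
  show ∏ j, (y j * Real.exp (lam j + ∑ m, A j m * ∏ k, y k ^ B m k)) ^ B i j = _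
  have hstep : ∀ j, (y j * Real.exp (lam j + ∑ m, A j m * ∏ k, y k ^ B m k)) ^ B i j
      = y j ^ B i j * Real.exp ((lam j + ∑ m, A j m * x m) * B i j) := by
    intro j
    simp_rw [hprod]
    rw [Real.mul_rpow (hypos j).le (Real.exp_pos _).le,
      Real.rpow_def_of_pos (Real.exp_pos _), Real.log_exp]
  simp_rw [hstep]
  rw [Finset.prod_mul_distrib, ← Real.exp_sum, phi_cancel B hB x hx i]
  show x i * _ = x i * _
  congr 1
  simp_rw [add_mul, Finset.sum_add_distrib, Finset.sum_mul]
  rw [Finset.sum_comm]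
  simp [Matrix.mulVec, dotProduct, Matrix.mul_apply, Finset.sum_mul, mul_comm,
    mul_left_comm, mul_assoc]
  refine Finset.sum_congr rfl fun m _ => ?_
  rw [Finset.mul_sum]
  exact Finset.sum_congr rfl fun j _ => by ring
end
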